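/- Let A, B ∈ SL(2,ℂ) satisfy A·B·A⁻¹ = B⁻¹ and B ≠ ±I. Then there exists P ∈ SL(2,ℂ) such that, after conjugating both A and B by P, exactly one of the following normal forms holds: (2) P·B·P⁻¹ = ε₁·[[λ, 0], [0, λ⁻¹]] for some sign ε₁ ∈ {1,−1} and some complex number λ with λ² ≠ 1, and P·A·P⁻¹ = ε₂·[[0, 1], [−1, 0]] for some sign ε₂ ∈ {1,−1}; or (3) P·B·P⁻¹ = ε₁·[[1, 1], [0, 1]] for some sign ε₁ ∈ {1,−1}, and P·A·P⁻¹ = ε₂·[[i, 0], [0, −i]] for some sign ε₂ ∈ {1,−1}. -/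

import Mathlib

open Matrix

private abbrev M2 := Matrix (Fin 2) (Fin 2) ℂ
private abbrev SL2 := Matrix.SpecialLinearGroup (Fin 2) ℂ

private lemma aux_cancelL (q : M2) (hq : q.det = 1) {x y : M2} (h : q * x = q * y) : x = y := by
  have hu : IsUnit q.det := by rw [hq]; exact isUnit_one
  calc x = q⁻¹ * (q * x) := (Matrix.nonsing_inv_mul_cancel_left q x hu).symm
    _ = q⁻¹ * (q * y) := by rw [h]
    _ = y := Matrix.nonsing_inv_mul_cancel_left q y hu

private lemma aux_cancelR (q : M2) (hq : q.det = 1) {x y : M2} (h : x * q = y * q) : x = y := by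
  have hu : IsUnit q.det := by rw [hq]; exact isUnit_one
  calc x = x * q * q⁻¹ := (Matrix.mul_nonsing_inv_cancel_right q x hu).symm
    _ = y * q * q⁻¹ := by rw [h]
    _ = y := Matrix.mul_nonsing_inv_cancel_right q y hu

private lemma aux_CH (m : M2) : m * m = m.trace • m - m.det • 1 := by
  ext i j
  fin_cases i <;> fin_cases j <;>
    simp [Matrix.mul_apply, Fin.sum_univ_two, Matrix.trace_fin_two, Matrix.det_fin_two,
      Matrix.one_apply] <;> ring

private lemma aux_collinear (x y : Fin 2 → ℂ) (hx : x ≠ 0)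
    (h : x 0 * y 1 - x 1 * y 0 = 0) : ∃ k : ℂ, y = k • x := by
  have hor : x 0 ≠ 0 ∨ x 1 ≠ 0 := by
    by_contra hc
    push_neg at hc
    exact hx (by funext i; fin_cases i <;> simp [hc.1, hc.2])
  rcases hor with h0 | h1
  · refine ⟨y 0 / x 0, funext fun i => ?_⟩
    fin_cases i <;> simp [Pi.smul_apply, smul_eq_mul] <;> field_simp <;> linear_combination h
  · refine ⟨y 1 / x 1, funext fun i => ?_⟩
    fin_cases i <;> simp [Pi.smul_apply, smul_eq_mul] <;> field_simp <;> linear_combination -h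

private lemma aux_coe_conj (Q X : SL2) :
    (↑Q : M2) * (↑(Q⁻¹ * X * Q) : M2) = (↑X : M2) * (↑Q : M2) := by
  rw [← Matrix.SpecialLinearGroup.coe_mul, ← Matrix.SpecialLinearGroup.coe_mul]
  congr 1
  group
  rfl

private lemma aux_conj_eq (Q X : SL2) (M : M2) (hM : (↑X : M2) * (↑Q : M2) = (↑Q : M2) * M) :
    (↑(Q⁻¹ * X * Q) : M2) = M :=
  aux_cancelL ↑Q Q.prop (by rw [aux_coe_conj, hM])

private lemma aux_inv_coe (X : SL2) (C : M2) (hC : (↑X : M2) * C = 1) :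
    (↑(X⁻¹) : M2) = C := by
  apply aux_cancelL ↑X X.prop
  rw [hC, ← Matrix.SpecialLinearGroup.coe_mul, mul_inv_cancel]
  rfl

private lemma aux_conj2 (N X : SL2) (M C : M2) (hX : (↑X : M2) = C)
    (hcomm : M * (↑N : M2) = (↑N : M2) * C) : (↑(N * X * N⁻¹) : M2) = M := by
  apply aux_cancelR ↑N N.prop
  rw [hcomm, ← hX, ← Matrix.SpecialLinearGroup.coe_mul, ← Matrix.SpecialLinearGroup.coe_mul]
  congr 1
  group
  rfl

theorem klein_bottle_normal_form (A B : Matrix.SpecialLinearGroup (Fin 2) ℂ)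
    (h : A * B * A⁻¹ = B⁻¹)
    (hB1 : (↑B : Matrix (Fin 2) (Fin 2) ℂ) ≠ 1)
    (hB2 : (↑B : Matrix (Fin 2) (Fin 2) ℂ) ≠ -1) :
    ∃ P : Matrix.SpecialLinearGroup (Fin 2) ℂ,
      Xor'
        (∃ ε₁ l : ℂ, (ε₁ = 1 ∨ ε₁ = -1) ∧ l ^ 2 ≠ 1 ∧
          (↑(P * B * P⁻¹) : Matrix (Fin 2) (Fin 2) ℂ) = ε₁ • !![l, 0; 0, l⁻¹] ∧
          ∃ ε₂ : ℂ, (ε₂ = 1 ∨ ε₂ = -1) ∧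
            (↑(P * A * P⁻¹) : Matrix (Fin 2) (Fin 2) ℂ) = ε₂ • !![0, 1; -1, 0])
        (∃ ε₁ : ℂ, (ε₁ = 1 ∨ ε₁ = -1) ∧
          (↑(P * B * P⁻¹) : Matrix (Fin 2) (Fin 2) ℂ) = ε₁ • !![1, 1; 0, 1] ∧
          ∃ ε₂ : ℂ, (ε₂ = 1 ∨ ε₂ = -1) ∧
            (↑(P * A * P⁻¹) : Matrix (Fin 2) (Fin 2) ℂ) =
              ε₂ • !![Complex.I, 0; 0, -Complex.I]) := by
  set bm : M2 := (↑B : M2) with hbmdef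
  set am : M2 := (↑A : M2) with hamdef
  have hdb : bm.det = 1 := B.prop
  have hda : am.det = 1 := A.prop
  have hCH : bm * bm = bm.trace • bm - 1 := by
    have h0 := aux_CH bm
    rw [hdb, one_smul] at h0
    exact h0
  -- group relations
  have h6 : A * B⁻¹ = B * A := by
    calc A * B⁻¹ = (A * B * A⁻¹)⁻¹ * A := by group
      _ = (B⁻¹)⁻¹ * A := by rw [h]
      _ = B * A := by group
  have hrel : ∀ Q : SL2, (Q⁻¹*A*Q) * (Q⁻¹*B*Q) = (Q⁻¹*B*Q)⁻¹ * (Q⁻¹*A*Q) := by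
    intro Q
    have h2 : A * B = B⁻¹ * A := by
      calc A * B = (A * B * A⁻¹) * A := by group
        _ = B⁻¹ * A := by rw [h]
    calc (Q⁻¹*A*Q) * (Q⁻¹*B*Q) = Q⁻¹*(A*B)*Q := by group
      _ = Q⁻¹*(B⁻¹*A)*Q := by rw [h2]
      _ = (Q⁻¹*B*Q)⁻¹*(Q⁻¹*A*Q) := by group
  by_cases htr : bm.trace ^ 2 = 4
  · -- Case (3): B is ± unipotent
    set t := bm.trace with htdef
    have hte : t = 2 ∨ t = -2 := by
      have e0 : (t - 2) * (t + 2) = 0 := by linear_combination htr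
      rcases mul_eq_zero.mp e0 with h1 | h1
      · left; linear_combination h1
      · right; linear_combination h1
    obtain ⟨eps, heps, hteps⟩ : ∃ e : ℂ, (e = 1 ∨ e = -1) ∧ t = 2 * e := by
      rcases hte with h1 | h1
      · exact ⟨1, Or.inl rfl, by rw [h1]; ring⟩
      · exact ⟨-1, Or.inr rfl, by rw [h1]; ring⟩
    have heps2 : eps * eps = 1 := by rcases heps with rfl | rfl <;> norm_num
    have heps0 : eps ≠ 0 := by rcases heps with rfl | rfl <;> norm_num
    obtain ⟨n, hndef⟩ : ∃ x : M2, x = eps • bm - 1 := ⟨_, rfl⟩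
    have hn2 : n * n = 0 := by
      have e1 : (eps • bm - 1) * (eps • bm - 1)
          = (eps * eps) • (bm * bm) - eps • bm - eps • bm + 1 := by
        simp only [sub_mul, mul_sub, one_mul, mul_one, Matrix.smul_mul, Matrix.mul_smul,
          smul_smul]
        abel
      rw [hndef, e1, heps2, hCH, one_smul, hteps, two_mul, add_smul]
      abel
    have hn0 : n ≠ 0 := by
      intro h0
      rw [hndef, sub_eq_zero] at h0
      rcases heps with rfl | rfl
      · exact hB1 (by simpa using h0)
      · apply hB2
        have h2 := congrArg (fun X : M2 => (-1 : ℂ) • X) h0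
        simpa using h2
    obtain ⟨i0, j0, hij⟩ : ∃ i j, n i j ≠ 0 := by
      by_contra hc
      push_neg at hc
      exact hn0 (by ext i j; simpa using hc i j)
    obtain ⟨wv, hwvdef⟩ : ∃ x : Fin 2 → ℂ, x = (Pi.single j0 1 : Fin 2 → ℂ) := ⟨_, rfl⟩
    obtain ⟨v, hvdef⟩ : ∃ x : Fin 2 → ℂ, x = n.mulVec wv := ⟨_, rfl⟩
    have hv : v ≠ 0 := by
      intro h0
      apply hij
      have h1 := congrFun h0 i0
      rw [hvdef, hwvdef] at h1
      simpa [Matrix.mulVec_single] using h1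
    have hnv : n.mulVec v = 0 := by
      rw [hvdef, Matrix.mulVec_mulVec, hn2, Matrix.zero_mulVec]
    have hbeps : bm = eps • n + eps • 1 := by
      rw [hndef, smul_sub, smul_smul, heps2, one_smul]
      abel
    have hbmv : bm.mulVec v = eps • v := by
      rw [hbeps, Matrix.add_mulVec, Matrix.smul_mulVec, hnv, smul_zero, zero_add,
        Matrix.smul_mulVec, Matrix.one_mulVec]
    have hbmw : bm.mulVec wv = eps • v + eps • wv := by
      rw [hbeps, Matrix.add_mulVec, Matrix.smul_mulVec, ← hvdef,
        Matrix.smul_mulVec, Matrix.one_mulVec]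
    have hind : v 0 * wv 1 - v 1 * wv 0 ≠ 0 := by
      intro h0
      obtain ⟨k, hk⟩ := aux_collinear v wv hv h0
      apply hv
      rw [hvdef, hk, Matrix.mulVec_smul, hnv, smul_zero]
    obtain ⟨s, hs⟩ := IsAlgClosed.exists_pow_nat_eq ((v 0 * wv 1 - v 1 * wv 0)⁻¹) (n := 2)
      (by norm_num)
    have hs0 : s ≠ 0 := by
      intro h0
      rw [h0] at hs
      exact inv_ne_zero hind (by linear_combination -hs)
    have hq : (!![s * v 0, s * wv 0; s * v 1, s * wv 1] : M2).det = 1 := by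
      have e1 : s ^ 2 * (v 0 * wv 1 - v 1 * wv 0) = 1 := by
        rw [hs]; exact inv_mul_cancel₀ hind
      rw [Matrix.det_fin_two]
      simp
      linear_combination e1
    set Q : SL2 := ⟨!![s * v 0, s * wv 0; s * v 1, s * wv 1], hq⟩ with hQdef
    have hQcoe : (↑Q : M2) = !![s * v 0, s * wv 0; s * v 1, s * wv 1] := rfl
    have hbvi : ∀ i, bm i 0 * v 0 + bm i 1 * v 1 = eps * v i := by
      intro i
      have h1 := congrFun hbmv i
      simpa [Matrix.mulVec, dotProduct, Fin.sum_univ_two] using h1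
    have hbwi : ∀ i, bm i 0 * wv 0 + bm i 1 * wv 1 = eps * v i + eps * wv i := by
      intro i
      have h1 := congrFun hbmw i
      simpa [Matrix.mulVec, dotProduct, Fin.sum_univ_two] using h1
    have hMb : bm * (↑Q : M2) = (↑Q : M2) * (eps • !![1, 1; 0, 1]) := by
      rw [hQcoe]
      ext i k
      fin_cases i <;> fin_cases k
      · simp [Matrix.mul_apply, Fin.sum_univ_two]
        linear_combination s * hbvi 0
      · simp [Matrix.mul_apply, Fin.sum_univ_two]
        linear_combination s * hbwi 0
      · simp [Matrix.mul_apply, Fin.sum_univ_two]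
        linear_combination s * hbvi 1
      · simp [Matrix.mul_apply, Fin.sum_univ_two]
        linear_combination s * hbwi 1
    have hxB : (↑(Q⁻¹ * B * Q) : M2) = eps • !![1, 1; 0, 1] := aux_conj_eq Q B _ hMb
    have hyB : (↑((Q⁻¹ * B * Q)⁻¹) : M2) = eps • !![1, -1; 0, 1] := by
      apply aux_inv_coe
      rw [hxB, Matrix.smul_mul, Matrix.mul_smul, smul_smul, heps2, one_smul]
      ext i k
      fin_cases i <;> fin_cases k <;>
        simp [Matrix.mul_apply, Fin.sum_univ_two, Matrix.one_apply]
    obtain ⟨xA, hxAdef⟩ : ∃ x : M2, x = ↑(Q⁻¹ * A * Q) := ⟨_, rfl⟩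
    have hrelc : xA * (eps • !![1, 1; 0, 1]) = (eps • !![1, -1; 0, 1]) * xA := by
      rw [hxAdef, ← hxB, ← hyB, ← Matrix.SpecialLinearGroup.coe_mul,
        ← Matrix.SpecialLinearGroup.coe_mul, hrel Q]
    have hrelc' : xA * !![1, 1; 0, 1] = !![1, -1; 0, 1] * xA := by
      apply smul_right_injective M2 heps0
      show eps • (xA * !![1, 1; 0, 1]) = eps • (!![1, -1; 0, 1] * xA)
      rw [← Matrix.mul_smul, ← Matrix.smul_mul]
      exact hrelc
    have h10 : xA 1 0 = 0 := by
      have h1 := congrFun (congrFun hrelc' 0) 0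
      simp [Matrix.mul_apply, Fin.sum_univ_two] at h1
      linear_combination h1
    have h11 : xA 1 1 = -xA 0 0 := by
      have h1 := congrFun (congrFun hrelc' 0) 1
      simp [Matrix.mul_apply, Fin.sum_univ_two] at h1
      linear_combination h1
    have hdxA : xA.det = 1 := by rw [hxAdef]; exact (Q⁻¹ * A * Q).prop
    have hal2 : xA 0 0 ^ 2 = -1 := by
      rw [Matrix.det_fin_two, h10, h11] at hdxA
      linear_combination -hdxA
    have hal0 : xA 0 0 ≠ 0 := by
      intro h0
      rw [h0] at hal2
      norm_num at hal2
    have halpm : xA 0 0 = Complex.I ∨ xA 0 0 = -Complex.I := by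
      have e0 : (xA 0 0 - Complex.I) * (xA 0 0 + Complex.I) = 0 := by
        linear_combination hal2 - Complex.I_sq
      rcases mul_eq_zero.mp e0 with h1 | h1
      · left; linear_combination h1
      · right; linear_combination h1
    have hxAmat : xA = !![xA 0 0, xA 0 1; 0, -xA 0 0] := by
      have e := Matrix.eta_fin_two xA
      rw [h10, h11] at e
      exact e
    have hNdet : (!![1, xA 0 1 / (2 * xA 0 0); 0, 1] : M2).det = 1 := by
      simp [Matrix.det_fin_two]
    set N : SL2 := ⟨!![1, xA 0 1 / (2 * xA 0 0); 0, 1], hNdet⟩ with hNdef2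
    have hNcoe : (↑N : M2) = !![1, xA 0 1 / (2 * xA 0 0); 0, 1] := rfl
    have hZB : (↑(N * (Q⁻¹ * B * Q) * N⁻¹) : M2) = eps • !![1, 1; 0, 1] := by
      apply aux_conj2 N (Q⁻¹ * B * Q) _ _ hxB
      rw [hNcoe, Matrix.smul_mul, Matrix.mul_smul]
      congr 1
      ext i k
      fin_cases i <;> fin_cases k <;> simp [Matrix.mul_apply, Fin.sum_univ_two] <;> ring
    have hZA : (↑(N * (Q⁻¹ * A * Q) * N⁻¹) : M2) = !![xA 0 0, 0; 0, -xA 0 0] := by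
      apply aux_conj2 N (Q⁻¹ * A * Q) _ (!![xA 0 0, xA 0 1; 0, -xA 0 0])
        (by rw [← hxAdef]; exact hxAmat)
      rw [hNcoe]
      ext i k
      fin_cases i <;> fin_cases k
      · simp [Matrix.mul_apply, Fin.sum_univ_two]
      · simp [Matrix.mul_apply, Fin.sum_univ_two]
        field_simp
        ring
      · simp [Matrix.mul_apply, Fin.sum_univ_two]
      · simp [Matrix.mul_apply, Fin.sum_univ_two]
    have heps2' : (-Complex.I * xA 0 0 = 1 ∨ -Complex.I * xA 0 0 = -1) := by
      rcases halpm with h1 | h1 <;> rw [h1]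
      · left; linear_combination -Complex.I_sq
      · right; linear_combination Complex.I_sq
    have htgt : ((-Complex.I * xA 0 0) • !![Complex.I, 0; 0, -Complex.I] : M2)
        = !![xA 0 0, 0; 0, -xA 0 0] := by
      ext i k
      fin_cases i <;> fin_cases k <;> simp
      · linear_combination -xA 0 0 * Complex.I_sq
      · linear_combination xA 0 0 * Complex.I_sq
    have hPB : (N * Q⁻¹) * B * (N * Q⁻¹)⁻¹ = N * (Q⁻¹ * B * Q) * N⁻¹ := by group
    have hPA : (N * Q⁻¹) * A * (N * Q⁻¹)⁻¹ = N * (Q⁻¹ * A * Q) * N⁻¹ := by group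
    refine ⟨N * Q⁻¹, Or.inr ⟨⟨eps, heps, ?_, -Complex.I * xA 0 0, heps2', ?_⟩, ?_⟩⟩
    · rw [hPB]; exact hZB
    · rw [hPA, hZA, htgt]
    · rintro ⟨e1, l, he1, hl2', heq, -⟩
      rw [hPB, hZB] at heq
      have h1 := congrFun (congrFun heq 0) 1
      simp at h1
      exact heps0 h1
  · -- Case (2): B diagonalizable with eigenvalues lam ≠ mu
    obtain ⟨d, hd⟩ := IsAlgClosed.exists_pow_nat_eq (bm.trace ^ 2 - 4) (n := 2) (by norm_num)
    have hd0 : d ≠ 0 := by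
      intro h0
      apply htr
      rw [h0] at hd
      linear_combination -hd
    set t := bm.trace with htdef
    obtain ⟨lam, mu, hlm, hsum, hne⟩ :
        ∃ lam mu : ℂ, lam * mu = 1 ∧ lam + mu = t ∧ lam ≠ mu := by
      refine ⟨(t+d)/2, (t-d)/2, ?_, by ring, ?_⟩
      · have h4 : (t+d)/2 * ((t-d)/2) = (t^2 - d^2)/4 := by ring
        rw [h4, hd]
        field_simp
        ring
      · intro he
        apply hd0
        linear_combination he
    have hl0 : lam ≠ 0 := left_ne_zero_of_mul_eq_one hlm
    have hm0 : mu ≠ 0 := right_ne_zero_of_mul_eq_one hlm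
    have hl2 : lam ^ 2 ≠ 1 := by
      intro h1
      have h2 : lam * mu = lam * lam := by rw [hlm]; linear_combination -h1
      exact hne (mul_left_cancel₀ hl0 h2).symm
    have hm2 : mu ^ 2 ≠ 1 := by
      intro h1
      have h2 : mu * lam = mu * mu := by rw [mul_comm mu lam, hlm]; linear_combination -h1
      exact hne (mul_left_cancel₀ hm0 h2)
    have hlinv : lam⁻¹ = mu := inv_eq_of_mul_eq_one_right hlm
    -- eigenvector v for lam
    obtain ⟨m1, hm1def⟩ : ∃ x : M2, x = bm - mu • 1 := ⟨_, rfl⟩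
    have hm1ne : m1 ≠ 0 := by
      intro h0
      apply hm2
      rw [hm1def] at h0
      have hb : bm = mu • 1 := by rwa [sub_eq_zero] at h0
      have h1 : ((mu : ℂ) • (1 : M2)).det = 1 := by rw [← hb]; exact hdb
      rw [Matrix.det_smul, Matrix.det_one] at h1
      simpa using h1
    have hbm1 : bm * m1 = lam • m1 := by
      have e1 : bm * m1 = bm * bm - mu • bm := by
        rw [hm1def, mul_sub, Matrix.mul_smul, mul_one]
      have e2 : lam • m1 = lam • bm - (lam * mu) • (1 : M2) := by
        rw [hm1def, smul_sub, smul_smul]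
      have e3 : t - mu = lam := by linear_combination -hsum
      rw [e1, e2, hCH, hlm, one_smul,
        show t • bm - 1 - mu • bm = (t - mu) • bm - 1 from by rw [sub_smul]; abel, e3]
    obtain ⟨i0, j0, hij⟩ : ∃ i j, m1 i j ≠ 0 := by
      by_contra hc
      push_neg at hc
      exact hm1ne (by ext i j; simpa using hc i j)
    obtain ⟨v, hvdef⟩ : ∃ x : Fin 2 → ℂ, x = m1.mulVec (Pi.single j0 1) := ⟨_, rfl⟩
    have hv : v ≠ 0 := by
      intro h0
      apply hij
      have h1 := congrFun h0 i0
      rw [hvdef] at h1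
      simpa [Matrix.mulVec_single] using h1
    have hbv : bm.mulVec v = lam • v := by
      rw [hvdef, Matrix.mulVec_mulVec, hbm1, Matrix.smul_mulVec]
    -- v and w := A·v  are independent eigenvectors
    obtain ⟨bi, hbidef⟩ : ∃ x : M2, x = ↑(B⁻¹) := ⟨_, rfl⟩
    have hbib : bi * bm = 1 := by
      rw [hbidef, ← Matrix.SpecialLinearGroup.coe_mul, inv_mul_cancel]
      rfl
    have hba : bm * am = am * bi := by
      rw [hbidef, ← Matrix.SpecialLinearGroup.coe_mul, ← Matrix.SpecialLinearGroup.coe_mul, ← h6]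
    have hbiv : bi.mulVec v = mu • v := by
      have h1 : lam • bi.mulVec v = v := by
        rw [← Matrix.mulVec_smul, ← hbv, Matrix.mulVec_mulVec, hbib, Matrix.one_mulVec]
      calc bi.mulVec v = (mu * lam) • bi.mulVec v := by
            rw [mul_comm, hlm, one_smul]
        _ = mu • (lam • bi.mulVec v) := by rw [smul_smul]
        _ = mu • v := by rw [h1]
    obtain ⟨w, hwdef⟩ : ∃ x : Fin 2 → ℂ, x = am.mulVec v := ⟨_, rfl⟩
    have hw : w ≠ 0 := by
      intro h0
      apply hv
      have hu : IsUnit am.det := by rw [hda]; exact isUnit_one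
      calc v = (am⁻¹ * am).mulVec v := by
            rw [Matrix.nonsing_inv_mul _ hu, Matrix.one_mulVec]
        _ = am⁻¹.mulVec (am.mulVec v) := by rw [Matrix.mulVec_mulVec]
        _ = 0 := by rw [← hwdef, h0, Matrix.mulVec_zero]
    have hbw : bm.mulVec w = mu • w := by
      rw [hwdef, Matrix.mulVec_mulVec, hba, ← Matrix.mulVec_mulVec, hbiv, Matrix.mulVec_smul]
    have hind : v 0 * w 1 - v 1 * w 0 ≠ 0 := by
      intro h0
      obtain ⟨k, hk⟩ := aux_collinear v w hv h0
      have hk0 : k ≠ 0 := by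
        intro h1
        apply hw
        rw [hk, h1, zero_smul]
      have e1 : bm.mulVec w = (k * lam) • v := by
        rw [hk, Matrix.mulVec_smul, hbv, smul_smul]
      have e2 : bm.mulVec w = (mu * k) • v := by
        rw [hbw, hk, smul_smul]
      have e3 : (k * lam - mu * k) • v = 0 := by
        rw [sub_smul, ← e1, ← e2, sub_self]
      have hcoef := (smul_eq_zero.mp e3).resolve_right hv
      apply hne
      have e4 : k * (lam - mu) = 0 := by linear_combination hcoef
      have e5 := (mul_eq_zero.mp e4).resolve_left hk0
      exact sub_eq_zero.mp e5
    obtain ⟨s, hs⟩ := IsAlgClosed.exists_pow_nat_eq ((v 0 * w 1 - v 1 * w 0)⁻¹) (n := 2) (by norm_num)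
    have hs0 : s ≠ 0 := by
      intro h0
      rw [h0] at hs
      exact inv_ne_zero hind (by linear_combination -hs)
    have hq : (!![s * v 0, s * w 0; s * v 1, s * w 1] : M2).det = 1 := by
      have e1 : s ^ 2 * (v 0 * w 1 - v 1 * w 0) = 1 := by
        rw [hs]; exact inv_mul_cancel₀ hind
      rw [Matrix.det_fin_two]
      simp
      linear_combination e1
    set Q : SL2 := ⟨!![s * v 0, s * w 0; s * v 1, s * w 1], hq⟩ with hQdef
    have hQcoe : (↑Q : M2) = !![s * v 0, s * w 0; s * v 1, s * w 1] := rfl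
    have hbvi : ∀ i, bm i 0 * v 0 + bm i 1 * v 1 = lam * v i := by
      intro i
      have h1 := congrFun hbv i
      simpa [Matrix.mulVec, dotProduct, Fin.sum_univ_two] using h1
    have hbwi : ∀ i, bm i 0 * w 0 + bm i 1 * w 1 = mu * w i := by
      intro i
      have h1 := congrFun hbw i
      simpa [Matrix.mulVec, dotProduct, Fin.sum_univ_two] using h1
    have hawi : ∀ i, am i 0 * v 0 + am i 1 * v 1 = w i := by
      intro i
      have h1 := congrFun hwdef i
      simpa [Matrix.mulVec, dotProduct, Fin.sum_univ_two] using h1.symm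
    have hMb : bm * (↑Q : M2) = (↑Q : M2) * !![lam, 0; 0, mu] := by
      rw [hQcoe]
      ext i k
      fin_cases i <;> fin_cases k
      · simp [Matrix.mul_apply, Fin.sum_univ_two]
        linear_combination s * hbvi 0
      · simp [Matrix.mul_apply, Fin.sum_univ_two]
        linear_combination s * hbwi 0
      · simp [Matrix.mul_apply, Fin.sum_univ_two]
        linear_combination s * hbvi 1
      · simp [Matrix.mul_apply, Fin.sum_univ_two]
        linear_combination s * hbwi 1
    have hxB : (↑(Q⁻¹ * B * Q) : M2) = !![lam, 0; 0, mu] := aux_conj_eq Q B _ hMb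
    have hyB : (↑((Q⁻¹ * B * Q)⁻¹) : M2) = !![mu, 0; 0, lam] := by
      apply aux_inv_coe
      rw [hxB]
      ext i k
      fin_cases i <;> fin_cases k <;>
        simp [Matrix.mul_apply, Fin.sum_univ_two, Matrix.one_apply]
      · exact hlm
      · rw [mul_comm]; exact hlm
    obtain ⟨xA, hxAdef⟩ : ∃ x : M2, x = ↑(Q⁻¹ * A * Q) := ⟨_, rfl⟩
    have hrelc : xA * !![lam, 0; 0, mu] = !![mu, 0; 0, lam] * xA := by
      rw [hxAdef, ← hxB, ← hyB, ← Matrix.SpecialLinearGroup.coe_mul,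
        ← Matrix.SpecialLinearGroup.coe_mul, hrel Q]
    have h00 : xA 0 0 = 0 := by
      have h1 := congrFun (congrFun hrelc 0) 0
      simp [Matrix.mul_apply, Fin.sum_univ_two] at h1
      have h2 : xA 0 0 * (lam - mu) = 0 := by linear_combination h1
      exact (mul_eq_zero.mp h2).resolve_right (sub_ne_zero.mpr hne)
    have h11 : xA 1 1 = 0 := by
      have h1 := congrFun (congrFun hrelc 1) 1
      simp [Matrix.mul_apply, Fin.sum_univ_two] at h1
      have h2 : xA 1 1 * (mu - lam) = 0 := by linear_combination h1
      exact (mul_eq_zero.mp h2).resolve_right (sub_ne_zero.mpr (Ne.symm hne))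
    have hqxa : (↑Q : M2) * xA = am * (↑Q : M2) := by
      rw [hxAdef]; exact aux_coe_conj Q A
    have hcA : ∀ i, s * w i * xA 1 0 = s * w i := by
      intro i
      have hcw := congrFun (congrFun hqxa i) 0
      rw [hQcoe] at hcw
      fin_cases i
      · show s * w 0 * xA 1 0 = s * w 0
        simp [Matrix.mul_apply, Fin.sum_univ_two, h00] at hcw
        linear_combination hcw + s * hawi 0
      · show s * w 1 * xA 1 0 = s * w 1
        simp [Matrix.mul_apply, Fin.sum_univ_two, h00] at hcw
        linear_combination hcw + s * hawi 1
    obtain ⟨iw, hiw⟩ : ∃ i, w i ≠ 0 := by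
      by_contra hc
      push_neg at hc
      exact hw (funext fun i => hc i)
    have h10 : xA 1 0 = 1 := by
      have e2 : s * w iw * (xA 1 0 - 1) = 0 := by linear_combination hcA iw
      rcases mul_eq_zero.mp e2 with h1 | h1
      · exact absurd h1 (mul_ne_zero hs0 hiw)
      · linear_combination h1
    have hdxA : xA.det = 1 := by rw [hxAdef]; exact (Q⁻¹ * A * Q).prop
    have h01 : xA 0 1 = -1 := by
      rw [Matrix.det_fin_two, h00, h11, h10] at hdxA
      linear_combination -hdxA
    have hxAmat : xA = (-1 : ℂ) • !![0, 1; -1, 0] := by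
      have e := Matrix.eta_fin_two xA
      rw [h00, h01, h10, h11] at e
      rw [e]
      ext i k
      fin_cases i <;> fin_cases k <;> simp
    refine ⟨Q⁻¹, Or.inl ⟨⟨1, lam, Or.inl rfl, hl2, ?_, -1, Or.inr rfl, ?_⟩, ?_⟩⟩
    · rw [inv_inv, hxB, one_smul, hlinv]
    · rw [inv_inv, ← hxAdef, hxAmat]
    · rintro ⟨e1, he1, heq, -⟩
      rw [inv_inv, hxB] at heq
      have h1 := congrFun (congrFun heq 0) 1
      simp at h1
      rcases he1 with rfl | rfl <;> norm_num at h1
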